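/- (Claim in the proof of Proposition 5.2, case (b).) Let n ≥ 4 and let (V₁, …, V_{2(n−1)}) be a positively convex 2(n−1)-gon in ℂ that is centrally symmetric about 0 (V_{j+n−1} = −V_j for all j, indices mod 2(n−1)) and whose vertices all lie on the unit circle (|V_j| = 1 for all j). Then 0 belongs to the level-(n−2) diagonal-gon, and moreover there exists r > 0 such that the open disk { P ∈ ℂ : |P| < r } is contained in the level-(n−2) diagonal-gon. -/

import Mathlib

noncomputable section

/-- The (strict) total order on `ℂ`: compare imaginary parts first, then real parts. -/
def cLt (a b : ℂ) : Prop := a.im < b.im ∨ (a.im = b.im ∧ a.re < b.re)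

/-- The corresponding non-strict order on `ℂ`. -/
def cLe (a b : ℂ) : Prop := cLt a b ∨ a = b

/-- `cross u v = Im (conj u * v)`. -/
def cross (u v : ℂ) : ℝ := ((starRingEnd ℂ) u * v).im

/-- A positively convex `h`-gon: every other vertex lies strictly to the left of each
directed edge from `V (j-1)` to `V j`. -/
def PosConvex {h : ℕ} (V : ZMod h → ℂ) : Prop :=
  ∀ j i : ZMod h, i ≠ j - 1 → i ≠ j →
    0 < cross (V j - V (j - 1)) (V i - V (j - 1))

/-- The (open) level-`s` diagonal-gon of an `h`-gon. -/
def DiagGon {h : ℕ} (V : ZMod h → ℂ) (s : ℕ) : Set ℂ :=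
  {P : ℂ | ∀ j : ZMod h, 0 < cross (V (j + (s : ZMod h)) - V j) (P - V j)}

/-- Edge vectors of an `h`-gon. -/
def zEdge {h : ℕ} (V : ZMod h → ℂ) (j : ZMod h) : ℂ := V j - V (j - 1)

/-- Central symmetry about `0` for a `2(n-1)`-gon. -/
def DSym (n : ℕ) (V : ZMod (2 * (n - 1)) → ℂ) : Prop :=
  ∀ j : ZMod (2 * (n - 1)), V (j + ((n - 1 : ℕ) : ZMod (2 * (n - 1)))) = -V j

/-- A stable `2(n-1)`-gon of type `D_n`, with punctures `B₊ = B` and `B₋ = -B`. -/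
def IsStableDGon (n : ℕ) (V : ZMod (2 * (n - 1)) → ℂ) (B : ℂ) : Prop :=
  PosConvex V ∧ DSym n V ∧ cLe (-B) B ∧
    (-B) ∈ DiagGon V (n - 2) ∧ B ∈ DiagGon V (n - 2)

/-- The `2n` marked points of a type `D_n` gon: the vertices together with the two punctures. -/
def DPoints (n : ℕ) (V : ZMod (2 * (n - 1)) → ℂ) (B : ℂ) :
    ZMod (2 * (n - 1)) ⊕ Fin 2 → ℂ :=
  Sum.elim V (fun b => if b = 0 then B else -B)

/-- `Y 0, Y 1, …, Y (2n-1)` is an increasing enumeration (via the bijection `e`) of the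
`2n` marked points; `Y i` corresponds to the point `Y_{i-n}` (for `0 ≤ i ≤ n-1`) resp.
`Y_{i-n+1}` (for `n ≤ i ≤ 2n-1`) of the paper. -/
def DEnum (n : ℕ) (V : ZMod (2 * (n - 1)) → ℂ) (B : ℂ) (Y : ℕ → ℂ)
    (e : Fin (2 * n) ≃ (ZMod (2 * (n - 1)) ⊕ Fin 2)) : Prop :=
  (∀ m : Fin (2 * n), Y (m : ℕ) = DPoints n V B (e m)) ∧
  (∀ i j : ℕ, i < j → j < 2 * n → cLe (Y i) (Y j))

lemma diagGon_isOpen {h : ℕ} [NeZero h] (V : ZMod h → ℂ) (s : ℕ) :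
    IsOpen (DiagGon V s) := by
  have heq : DiagGon V s =
      ⋂ j : ZMod h, {P : ℂ | 0 < cross (V (j + (s : ZMod h)) - V j) (P - V j)} := by
    ext P; simp [DiagGon, Set.mem_iInter]
  rw [heq]
  refine isOpen_iInter_of_finite fun j => ?_
  have hc : Continuous fun P : ℂ =>
      cross (V (j + (s : ZMod h)) - V j) (P - V j) := by
    unfold cross
    fun_prop
  exact isOpen_lt continuous_const hc

lemma cross_key (a b : ℂ) :
    cross (b - a) (0 - a) = cross (-a - b) (a - b) / 2 := by
  simp only [cross, Complex.mul_im, Complex.sub_re, Complex.sub_im,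
    Complex.neg_re, Complex.neg_im, Complex.zero_re, Complex.zero_im,
    Complex.conj_re, Complex.conj_im]
  ring

/-- (Claim in the proof of Proposition 5.2, case (b).) For a centrally symmetric
positively convex `2(n-1)`-gon inscribed in the unit circle, the origin lies in the
level-`(n-2)` diagonal-gon, and indeed some open disk around the origin is contained in
it. -/
theorem origin_in_diagGon (n : ℕ) (hn : 4 ≤ n) (V : ZMod (2 * (n - 1)) → ℂ)
    (hpc : PosConvex V) (hsym : DSym n V) (hcirc : ∀ j, ‖V j‖ = 1) :
    (0 : ℂ) ∈ DiagGon V (n - 2) ∧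
    ∃ r : ℝ, 0 < r ∧ Metric.ball (0 : ℂ) r ⊆ DiagGon V (n - 2) := by
  haveI : NeZero (2 * (n - 1)) := ⟨by omega⟩
  have hmem : (0 : ℂ) ∈ DiagGon V (n - 2) := by
    intro j
    set k : ZMod (2 * (n - 1)) := j + ((n - 1 : ℕ) : ZMod (2 * (n - 1))) with hk
    have hcast : ((n - 1 : ℕ) : ZMod (2 * (n - 1))) = ((n - 2 : ℕ) : ZMod (2 * (n - 1))) + 1 := by
      have : (n - 1 : ℕ) = (n - 2) + 1 := by omega
      rw [this]; push_cast; ring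
    have hk1 : k - 1 = j + ((n - 2 : ℕ) : ZMod (2 * (n - 1))) := by
      rw [hk, hcast]; ring
    have hnd : ∀ m : ℕ, 0 < m → m < 2 * (n - 1) → ((m : ℕ) : ZMod (2 * (n - 1))) ≠ 0 := by
      intro m hm1 hm2 hc
      rw [ZMod.natCast_eq_zero_iff] at hc
      exact absurd (Nat.le_of_dvd hm1 hc) (by omega)
    have hj1 : j ≠ k - 1 := by
      rw [hk1]
      intro hc
      exact hnd (n - 2) (by omega) (by omega) (by
        have := hc
        nth_rewrite 1 [show j = j + 0 by ring] at this
        exact (add_left_cancel this).symm)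
    have hj2 : j ≠ k := by
      rw [hk]
      intro hc
      exact hnd (n - 1) (by omega) (by omega) (by
        have := hc
        nth_rewrite 1 [show j = j + 0 by ring] at this
        exact (add_left_cancel this).symm)
    have hcv := hpc k j hj1 hj2
    rw [hk1] at hcv
    have hVk : V k = -V j := hsym j
    rw [hVk] at hcv
    have := cross_key (V j) (V (j + ((n - 2 : ℕ) : ZMod (2 * (n - 1)))))
    calc (0 : ℝ) < cross (-V j - V (j + ((n - 2 : ℕ) : ZMod (2 * (n - 1)))))
          (V j - V (j + ((n - 2 : ℕ) : ZMod (2 * (n - 1))))) / 2 := by linarith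
      _ = cross (V (j + ((n - 2 : ℕ) : ZMod (2 * (n - 1)))) - V j) (0 - V j) := this.symm
  refine ⟨hmem, ?_⟩
  obtain ⟨r, hr, hball⟩ := Metric.isOpen_iff.mp (diagGon_isOpen V (n - 2)) 0 hmem
  exact ⟨r, hr, hball⟩
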